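/- Let G be a commutative transitive group (commuting is an equivalence relation on nontrivial elements). Then every nontrivial normal subgroup N of G with nontrivial centralizer C_G(N) is abelian. -/

import Mathlib

open scoped commutatorElement

theorem stmt17 {G : Type*} [Group G]
    (hCT : ∀ a b c : G, a ≠ 1 → b ≠ 1 → c ≠ 1 → ⁅a, b⁆ = 1 → ⁅b, c⁆ = 1 → ⁅a, c⁆ = 1)
    (N : Subgroup G) (hN : N.Normal) (hNbot : N ≠ ⊥)
    (hC : Subgroup.centralizer (N : Set G) ≠ ⊥) :
    ∀ a ∈ N, ∀ b ∈ N, a * b = b * a := by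
  obtain ⟨c, hc, hc1⟩ : ∃ c ∈ Subgroup.centralizer (N : Set G), c ≠ 1 := by
    by_contra h
    push_neg at h
    exact hC (Subgroup.eq_bot_iff_forall _ |>.2 h)
  intro a ha b hb
  rcases eq_or_ne a 1 with rfl | ha1
  · simp
  rcases eq_or_ne b 1 with rfl | hb1
  · simp
  have h1 : ⁅a, c⁆ = 1 := by
    rw [commutatorElement_eq_one_iff_mul_comm]
    exact hc a ha
  have h2 : ⁅c, b⁆ = 1 := by
    rw [commutatorElement_eq_one_iff_mul_comm]
    exact (hc b hb).symm
  have := hCT a c b ha1 hc1 hb1 h1 h2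
  rwa [commutatorElement_eq_one_iff_mul_comm] at this
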